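/- If X is a topological space, A ⊆ X is closed and locally arcwise-connected, E ⊆ X is closed, and ∂E is locally arcwise-connected, then (A ∩ E) ∪ ∂E is locally arcwise-connected. Moreover, if A and ∂E are connected, neither is separated by any point, and |A ∩ ∂E| ≥ 2, then (A ∩ E) ∪ ∂E is arcwise-connected and is not separated by any point. -/

import Mathlib

open Set

/-- A subset `S` is not separated by any point: removing any single point leaves it
connected. -/
def NotSeparatedByAnyPoint {X : Type*} [TopologicalSpace X] (S : Set X) : Prop :=
  ∀ p : X, IsPreconnected (S \ {p})

open Topology Filter

/-- Key truncation lemma: a path in `Z` from a point of a closed set `E` to a point of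
`frontier E` can be truncated at the first exit of `interior E`, yielding a path in
`Z ∩ E` ending on `frontier E`. -/
lemma joinedIn_inter_of_frontier {X : Type*} [TopologicalSpace X] {E Z : Set X}
    (hE : IsClosed E) {q x : X} (hq : q ∈ E) (hx : x ∈ frontier E)
    (h : JoinedIn Z q x) :
    ∃ r ∈ frontier E, JoinedIn (Z ∩ E) q r := by
  obtain ⟨γ, hγ⟩ := h
  set f := γ.extend with hf
  set T : Set ℝ := Icc (0 : ℝ) 1 ∩ f ⁻¹' (interior E)ᶜ with hT
  have hTclosed : IsClosed T :=
    isClosed_Icc.inter (isOpen_interior.isClosed_compl.preimage γ.continuous_extend)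
  have hTne : T.Nonempty := by
    refine ⟨1, ⟨zero_le_one, le_refl 1⟩, ?_⟩
    simp only [mem_preimage, mem_compl_iff, hf, γ.extend_one]
    exact hx.2
  have hTbdd : BddBelow T := ⟨0, fun s hs => hs.1.1⟩
  set t := sInf T with htdef
  have ht : t ∈ T := hTclosed.csInf_mem hTne hTbdd
  have h01 : t ∈ Icc (0 : ℝ) 1 := ht.1
  have htint : f t ∉ interior E := ht.2
  have hIco : ∀ s ∈ Ico (0 : ℝ) t, f s ∈ interior E := by
    intro s hs
    by_contra hc
    have hsT : s ∈ T := ⟨⟨hs.1, hs.2.le.trans h01.2⟩, hc⟩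
    exact absurd (csInf_le hTbdd hsT) (not_le.mpr hs.2)
  have hftE : f t ∈ E := by
    rcases eq_or_lt_of_le h01.1 with h0 | h0
    · rw [← h0]
      simpa [hf, γ.extend_zero] using hq
    · have htc : t ∈ closure (Ico (0 : ℝ) t) := by
        rw [closure_Ico h0.ne]
        exact ⟨h01.1, le_refl t⟩
      have := map_mem_closure γ.continuous_extend htc
        (fun s hs => interior_subset (hIco s hs))
      rwa [hE.closure_eq] at this
  have hr : f t ∈ frontier E := by
    rw [hE.frontier_eq]
    exact ⟨hftE, htint⟩
  refine ⟨f t, hr, ?_⟩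
  have key : ∀ s : unitInterval, (γ.truncate 0 t) s ∈ Z ∩ E := by
    intro s
    have hval : (γ.truncate 0 t) s = f (min (max (s : ℝ) 0) t) := rfl
    set u := min (max (s : ℝ) 0) t with hu
    have hu0 : 0 ≤ u := le_min (le_max_right _ _) h01.1
    have hut : u ≤ t := min_le_right _ _
    have hu1 : u ≤ 1 := hut.trans h01.2
    have huI : f u = γ ⟨u, hu0, hu1⟩ := γ.extend_extends' ⟨u, hu0, hu1⟩
    constructor
    · rw [hval, huI]
      exact hγ _
    · rw [hval]
      rcases eq_or_lt_of_le hut with he | hlt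
      · rw [he]; exact hftE
      · exact interior_subset (hIco u ⟨hu0, hlt⟩)
  have hJ : JoinedIn (Z ∩ E) (γ.extend (min 0 t)) (γ.extend t) := ⟨γ.truncate 0 t, key⟩
  rwa [min_eq_left h01.1, γ.extend_zero] at hJ

/-- In a set `A` whose subspace topology is locally path connected, every point has
arbitrarily small path-connected relative neighborhoods. -/
lemma exists_pc_nbhd {X : Type*} [TopologicalSpace X] {A : Set X}
    (hAl : LocPathConnectedSpace A) {p : X} (hp : p ∈ A) {O : Set X}
    (hO : IsOpen O) (hpO : p ∈ O) :
    ∃ W O', IsOpen O' ∧ p ∈ O' ∧ A ∩ O' ⊆ W ∧ W ⊆ A ∩ O ∧ IsPathConnected W ∧ p ∈ W := by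
  haveI : LocallyPathConnectedSpace A := hAl
  set x : ↥A := ⟨p, hp⟩ with hx
  set U : Set ↥A := Subtype.val ⁻¹' O with hU
  have hUopen : IsOpen U := hO.preimage continuous_subtype_val
  have hxU : x ∈ U := hpO
  set W₀ := pathComponentIn U x with hW₀
  have hW₀open : IsOpen W₀ := hUopen.pathComponentIn x
  have hxW₀ : x ∈ W₀ := mem_pathComponentIn_self hxU
  have hW₀pc : IsPathConnected W₀ := isPathConnected_pathComponentIn hxU
  obtain ⟨O', hO'open, hO'pre⟩ := isOpen_induced_iff.mp hW₀open
  refine ⟨Subtype.val '' W₀, O', hO'open, ?_, ?_, ?_, hW₀pc.image continuous_subtype_val,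
    ⟨x, hxW₀, rfl⟩⟩
  · have : x ∈ Subtype.val ⁻¹' O' := hO'pre ▸ hxW₀
    exact this
  · rintro y ⟨hyA, hyO'⟩
    have : (⟨y, hyA⟩ : ↥A) ∈ W₀ := by rw [← hO'pre]; exact hyO'
    exact ⟨⟨y, hyA⟩, this, rfl⟩
  · rintro _ ⟨z, hz, rfl⟩
    have hzU : z ∈ U := pathComponentIn_subset hz
    exact ⟨z.2, hzU⟩

/-- Criterion for a subtype to be locally path connected. -/
lemma locPathConnectedSpace_of_nbhds {X : Type*} [TopologicalSpace X] {S : Set X}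
    (h : ∀ p ∈ S, ∀ O : Set X, IsOpen O → p ∈ O →
      ∃ V O', IsOpen O' ∧ p ∈ O' ∧ S ∩ O' ⊆ V ∧ V ⊆ S ∩ O ∧ IsPathConnected V) :
    LocPathConnectedSpace S := by
  constructor
  intro x
  rw [Filter.hasBasis_self]
  intro t ht
  obtain ⟨t', ht', hsub⟩ := mem_nhds_induced Subtype.val x t |>.mp ht
  obtain ⟨O, hOsub, hOopen, hxO⟩ := mem_nhds_iff.mp ht'
  obtain ⟨V, O', hO'open, hpO', hSO'V, hVsub, hVpc⟩ := h x.1 x.2 O hOopen hxO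
  refine ⟨Subtype.val ⁻¹' V, ?_, ?_, ?_⟩
  · have hopen : IsOpen (Subtype.val ⁻¹' O' : Set ↥S) := hO'open.preimage continuous_subtype_val
    refine Filter.mem_of_superset (hopen.mem_nhds hpO') ?_
    intro y hy
    exact hSO'V ⟨y.2, hy⟩
  · rw [IsInducing.subtypeVal.isPathConnected_iff, Subtype.image_preimage_val,
      inter_eq_right.mpr (hVsub.trans inter_subset_left)]
    exact hVpc
  · intro y hy
    apply hsub
    have : (y : X) ∈ t' := hOsub ((hVsub hy).2)
    exact this

/-- A connected set which is locally path connected (as a subspace) is path connected. -/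
lemma isPathConnected_of_isConnected {X : Type*} [TopologicalSpace X] {A : Set X}
    (hAl : LocPathConnectedSpace A) (h : IsConnected A) : IsPathConnected A := by
  haveI : LocallyPathConnectedSpace A := hAl
  rw [isPathConnected_iff_pathConnectedSpace, pathConnectedSpace_iff_connectedSpace,
    ← isConnected_iff_connectedSpace]
  exact h

/-- Purely point-set gluing lemma: if `A'` is preconnected, `E` is closed, `D` is a
preconnected subset of `frontier E` containing `A' ∩ frontier E` and meeting `A'`,
then `(A' ∩ E) ∪ D` is preconnected. -/
lemma isPreconnected_inter_union {X : Type*} [TopologicalSpace X] {A' E D : Set X}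
    (hE : IsClosed E) (hA' : IsPreconnected A') (hD : IsPreconnected D)
    (hDfr : D ⊆ frontier E) (hfrD : A' ∩ frontier E ⊆ D) (hcD : (A' ∩ D).Nonempty) :
    IsPreconnected ((A' ∩ E) ∪ D) := by
  set M := (A' ∩ E) ∪ D with hM
  obtain ⟨c, hcA, hcDm⟩ := hcD
  have hDE : D ⊆ E := hDfr.trans hE.frontier_subset
  have key : ∀ u v : Set X, IsOpen u → IsOpen v → M ⊆ u ∪ v → D ⊆ u →
      (M ∩ v).Nonempty → (M ∩ (u ∩ v)).Nonempty := by
    intro u v hu hv hsub hDu hMv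
    obtain ⟨z, hzM, hzv⟩ := hMv
    by_contra hne
    rw [not_nonempty_iff_eq_empty] at hne
    have hdisj : ∀ w, w ∈ M → w ∈ u → w ∈ v → False := by
      intro w hwM hwu hwv
      exact absurd (show w ∈ M ∩ (u ∩ v) from ⟨hwM, hwu, hwv⟩) (hne ▸ notMem_empty w)
    -- z is in A' ∩ E ∩ v
    have hzAE : z ∈ A' ∩ E := by
      rcases hzM with h | h
      · exact h
      · exact absurd hzv (fun hzv' => hdisj z (Or.inr h) (hDu h) hzv')
    -- decompose A' into two relatively open pieces
    have hcover : A' ⊆ (v ∩ interior E) ∪ (Eᶜ ∪ u) := by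
      intro w hwA
      by_cases hwE : w ∈ E
      · have hwM : w ∈ M := Or.inl ⟨hwA, hwE⟩
        rcases hsub hwM with hwu | hwv
        · exact Or.inr (Or.inr hwu)
        · -- w ∈ v ; show w ∈ interior E or w ∈ u
          by_cases hwint : w ∈ interior E
          · exact Or.inl ⟨hwv, hwint⟩
          · have hwfr : w ∈ frontier E := by
              rw [hE.frontier_eq]; exact ⟨hwE, hwint⟩
            have : w ∈ D := hfrD ⟨hwA, hwfr⟩
            exact absurd (hDu this) (fun hwu => hdisj w hwM hwu hwv)
      · exact Or.inr (Or.inl hwE)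
    have h1 : (A' ∩ (v ∩ interior E)).Nonempty := by
      refine ⟨z, hzAE.1, hzv, ?_⟩
      by_cases hzint : z ∈ interior E
      · exact hzint
      · have hzfr : z ∈ frontier E := by
          rw [hE.frontier_eq]; exact ⟨hzAE.2, hzint⟩
        have hzD : z ∈ D := hfrD ⟨hzAE.1, hzfr⟩
        exact absurd (hDu hzD) (fun hzu => hdisj z hzM hzu hzv)
    have h2 : (A' ∩ (Eᶜ ∪ u)).Nonempty := ⟨c, hcA, Or.inr (hDu hcDm)⟩
    obtain ⟨w, hwA, ⟨hwv, hwint⟩, hw2⟩ :=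
      hA' (v ∩ interior E) (Eᶜ ∪ u) (hv.inter isOpen_interior)
        (hE.isOpen_compl.union hu) hcover h1 h2
    have hwE : w ∈ E := interior_subset hwint
    have hwu : w ∈ u := by
      rcases hw2 with h | h
      · exact absurd hwE h
      · exact h
    exact hdisj w (Or.inl ⟨hwA, hwE⟩) hwu hwv
  intro u v hu hv hsub hMu hMv
  obtain ⟨zu, hzu⟩ := hMu
  obtain ⟨zv, hzv⟩ := hMv
  by_cases hDu : D ⊆ u
  · exact key u v hu hv hsub hDu ⟨zv, hzv⟩
  · obtain ⟨d, hdD, hdu⟩ := not_subset.mp hDu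
    have hdv : d ∈ v := by
      rcases hsub (Or.inr hdD) with h | h
      · exact absurd h hdu
      · exact h
    by_cases hDv : D ⊆ v
    · have := key v u hv hu (by rwa [union_comm]) hDv ⟨zu, hzu⟩
      rwa [inter_comm u v]
    · obtain ⟨d', hd'D, hd'v⟩ := not_subset.mp hDv
      have hd'u : d' ∈ u := by
        rcases hsub (Or.inr hd'D) with h | h
        · exact h
        · exact absurd h hd'v
      obtain ⟨w, hwD, hw⟩ := hD u v hu hv ((subset_union_right).trans hsub)
        ⟨d', hd'D, hd'u⟩ ⟨d, hdD, hdv⟩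
      exact ⟨w, Or.inr hwD, hw⟩

theorem inter_union_frontier_locPathConnected
    {X : Type*} [TopologicalSpace X] (A E : Set X)
    (hA : IsClosed A) (hAl : LocPathConnectedSpace A)
    (hE : IsClosed E) (hfl : LocPathConnectedSpace ↥(frontier E)) :
    LocPathConnectedSpace ↥((A ∩ E) ∪ frontier E) ∧
    (IsConnected A → IsConnected (frontier E) →
      NotSeparatedByAnyPoint A → NotSeparatedByAnyPoint (frontier E) →
      (A ∩ frontier E).Nontrivial →
      IsPathConnected ((A ∩ E) ∪ frontier E) ∧
        NotSeparatedByAnyPoint ((A ∩ E) ∪ frontier E)) := by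
  set S := (A ∩ E) ∪ frontier E with hS
  have hfrE : frontier E ⊆ E := hE.frontier_subset
  have hSE : S ⊆ E := union_subset inter_subset_right hfrE
  constructor
  · -- local path connectedness
    apply locPathConnectedSpace_of_nbhds
    intro p hp O hO hpO
    by_cases hpint : p ∈ interior E
    · -- interior case
      have hpA : p ∈ A := by
        rcases hp with h | h
        · exact h.1
        · exact absurd hpint h.2
      obtain ⟨W, O'', hO''open, hpO'', hAOW, hWsub, hWpc, hpW⟩ :=
        exists_pc_nbhd hAl hpA (hO.inter isOpen_interior) ⟨hpO, hpint⟩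
      refine ⟨W, O'' ∩ interior E, hO''open.inter isOpen_interior, ⟨hpO'', hpint⟩, ?_, ?_, hWpc⟩
      · rintro y ⟨hyS, hyO'', hyint⟩
        rcases hyS with h | h
        · exact hAOW ⟨h.1, hyO''⟩
        · exact absurd hyint h.2
      · intro y hy
        obtain ⟨hyA, hyO, hyint⟩ := hWsub hy
        exact ⟨Or.inl ⟨hyA, interior_subset hyint⟩, hyO⟩
    · -- boundary case
      have hpfr : p ∈ frontier E := by
        rw [hE.frontier_eq]
        exact ⟨hSE hp, hpint⟩
      by_cases hpA : p ∈ A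
      · -- p ∈ A ∩ frontier E : glue
        obtain ⟨V, O₁, hO₁open, hpO₁, hfO₁V, hVsub, hVpc, hpV⟩ :=
          exists_pc_nbhd hfl hpfr hO hpO
        obtain ⟨W, O₂, hO₂open, hpO₂, hAO₂W, hWsub, hWpc, hpW⟩ :=
          exists_pc_nbhd hAl hpA (hO.inter hO₁open) ⟨hpO, hpO₁⟩
        refine ⟨(W ∩ E) ∪ V, O₁ ∩ O₂, hO₁open.inter hO₂open, ⟨hpO₁, hpO₂⟩, ?_, ?_, ?_⟩
        · rintro y ⟨hyS, hyO₁, hyO₂⟩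
          rcases hyS with h | h
          · exact Or.inl ⟨hAO₂W ⟨h.1, hyO₂⟩, h.2⟩
          · exact Or.inr (hfO₁V ⟨h, hyO₁⟩)
        · rintro y (⟨hyW, hyE⟩ | hyV)
          · obtain ⟨hyA, hyO, _⟩ := hWsub hyW
            exact ⟨Or.inl ⟨hyA, hyE⟩, hyO⟩
          · obtain ⟨hyf, hyO⟩ := hVsub hyV
            exact ⟨Or.inr hyf, hyO⟩
        · refine ⟨p, Or.inr hpV, ?_⟩
          rintro y (⟨hyW, hyE⟩ | hyV)
          · have hjWp : JoinedIn W y p := hWpc.joinedIn y hyW p hpW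
            obtain ⟨r, hrfr, hjWE⟩ := joinedIn_inter_of_frontier hE hyE hpfr hjWp
            have hrW : r ∈ W := hjWE.target_mem.1
            have hrV : r ∈ V := hfO₁V ⟨hrfr, (hWsub hrW).2.2⟩
            have hjV : JoinedIn V r p := hVpc.joinedIn r hrV p hpV
            exact ((hjWE.mono subset_union_left).trans (hjV.mono subset_union_right)).symm
          · exact ((hVpc.joinedIn y hyV p hpV).mono subset_union_right).symm
      · -- p ∉ A
        have hOA : IsOpen (O ∩ Aᶜ) := hO.inter hA.isOpen_compl
        obtain ⟨V, O₁, hO₁open, hpO₁, hfO₁V, hVsub, hVpc, hpV⟩ :=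
          exists_pc_nbhd hfl hpfr hOA ⟨hpO, hpA⟩
        refine ⟨V, O₁ ∩ Aᶜ, hO₁open.inter hA.isOpen_compl, ⟨hpO₁, hpA⟩, ?_, ?_, hVpc⟩
        · rintro y ⟨hyS, hyO₁, hyA⟩
          rcases hyS with h | h
          · exact absurd h.1 hyA
          · exact hfO₁V ⟨h, hyO₁⟩
        · intro y hy
          obtain ⟨hyf, hyO, _⟩ := hVsub hy
          exact ⟨Or.inr hyf, hyO⟩
  · -- path connectedness and non-separation
    intro hAc hfc hAns hfns hnt
    obtain ⟨a, ha, b, hb, hab⟩ := hnt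
    have hApc : IsPathConnected A := isPathConnected_of_isConnected hAl hAc
    have hfpc : IsPathConnected (frontier E) := isPathConnected_of_isConnected hfl hfc
    constructor
    · refine ⟨a, Or.inr ha.2, ?_⟩
      rintro y (⟨hyA, hyE⟩ | hyf)
      · have hjA : JoinedIn A y a := hApc.joinedIn y hyA a ha.1
        obtain ⟨r, hrfr, hjAE⟩ := joinedIn_inter_of_frontier hE hyE ha.2 hjA
        have hjf : JoinedIn (frontier E) r a := hfpc.joinedIn r hrfr a ha.2
        exact ((hjAE.mono (fun z hz => Or.inl hz)).trans
          (hjf.mono (fun z hz => Or.inr hz))).symm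
      · exact ((hfpc.joinedIn y hyf a ha.2).mono (fun z hz => Or.inr hz)).symm
    · intro p
      obtain ⟨c, hc, hcp⟩ : ∃ c ∈ A ∩ frontier E, c ≠ p := by
        rcases eq_or_ne a p with rfl | h
        · exact ⟨b, hb, fun hbp => hab hbp.symm⟩
        · exact ⟨a, ha, h⟩
      have hMeq : S \ {p} = ((A \ {p}) ∩ E) ∪ (frontier E \ {p}) := by
        ext z
        simp only [hS, mem_diff, mem_union, mem_inter_iff, mem_singleton_iff]
        tauto
      rw [hMeq]
      refine isPreconnected_inter_union hE (hAns p) (hfns p) diff_subset ?_ ?_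
      · rintro z ⟨⟨hzA, hzp⟩, hzfr⟩
        exact ⟨hzfr, hzp⟩
      · exact ⟨c, ⟨hc.1, hcp⟩, hc.2, hcp⟩
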